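/- arXiv:2009.07630 — 2 statements merged into one kernel-verified Lean document; each statement's English description precedes it below -/
import Mathlib

section
/- Let M be a loopless matroid with weights x : E → ℝ, B an x-optimal basis, and e ∈ B. Then the min-max weight μ_e(x) equals the minimum weight of an element in the fundamental cut D(e,B) = {f ∉ B : (B - e) + f is a basis}. -/
open Matroid Set

variable {α : Type*}

/-- A circuit of a matroid: a minimal dependent set. -/
def Matroid.IsCircuit' (M : Matroid α) (C : Set α) : Prop :=
  M.Dep C ∧ ∀ ⦃D⦄, D ⊂ C → M.Indep D

/-- Looplessness in the sense of the paper: no element is a loop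
(every singleton of the ground set is independent) and no element is a
coloop (no element lies in all bases). -/
def Matroid.PaperLoopless (M : Matroid α) : Prop :=
  ∀ e ∈ M.E, M.Indep {e} ∧ ∃ B, M.IsBase B ∧ e ∉ B

/-- The weight `x(B)` of a set of ground elements. -/
noncomputable def setWeight (x : α → ℝ) (B : Set α) : ℝ := ∑ᶠ e ∈ B, x e

/-- The min-max weight `μ_e(x)`: the minimum over circuits `C` containing `e`
of the maximum weight of an element of `C - e`. -/
noncomputable def muWeight (M : Matroid α) (x : α → ℝ) (e : α) : ℝ :=
  sInf {w | ∃ C, M.IsCircuit' C ∧ e ∈ C ∧ w = sSup (x '' (C \ {e}))}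

/-- The bottleneck weight `b_e(x) = min {x(e), μ_e(x)}`. -/
noncomputable def bottleneck (M : Matroid α) (x : α → ℝ) (e : α) : ℝ :=
  min (x e) (muWeight M x e)

/-- The minimum weight of a basis of `M`. -/
noncomputable def mwb (M : Matroid α) (x : α → ℝ) : ℝ :=
  sInf {w | ∃ B, M.IsBase B ∧ w = setWeight x B}

/-- `B` is an `x`-optimal basis of `M`. -/
def IsOptimalBase (M : Matroid α) (x : α → ℝ) (B : Set α) : Prop :=
  M.IsBase B ∧ ∀ B', M.IsBase B' → setWeight x B ≤ setWeight x B'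

/-- Deletion of a single element. -/
noncomputable def Matroid.del (M : Matroid α) (e : α) : Matroid α :=
  M ↾ (M.E \ {e})

/-- Contraction of a single element, defined by duality: `M/e = (M✶ \ e)✶`. -/
noncomputable def Matroid.con (M : Matroid α) (e : α) : Matroid α :=
  ((M✶ ↾ (M.E \ {e}))✶)

/-! ### Auxiliary lemmas -/

/-- Any dependent set in a finite matroid contains a circuit. -/
lemma exists_isCircuit_subset (M : Matroid α) [M.Finite] {X : Set α} (hX : M.Dep X) :
    ∃ C ⊆ X, M.IsCircuit' C := by
  have hXE : X ⊆ M.E := hX.subset_ground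
  have hXfin : X.Finite := M.ground_finite.subset hXE
  have hTfin : {Y | Y ⊆ X ∧ M.Dep Y}.Finite :=
    (hXfin.finite_subsets).subset (fun Y hY => hY.1)
  obtain ⟨C, hC, hmin⟩ := Set.Finite.exists_minimalFor (fun Y => Y.ncard) _ hTfin ⟨X, rfl.subset, hX⟩
  refine ⟨C, hC.1, hC.2, fun D hD => ?_⟩
  by_contra hDind
  have hDdep : M.Dep D := M.dep_of_not_indep hDind ((hD.subset.trans hC.1).trans hXE)
  have hlt : D.ncard < C.ncard := Set.ncard_lt_ncard hD (hXfin.subset hC.1)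
  exact absurd (hmin ⟨hD.subset.trans hC.1, hDdep⟩ hlt.le) (not_le.mpr hlt)

lemma Matroid.IsCircuit'.mem_closure_diff {M : Matroid α} {C : Set α} (hC : M.IsCircuit' C) {g : α}
    (hg : g ∈ C) : g ∈ M.closure (C \ {g}) := by
  have hI : M.Indep (C \ {g}) := hC.2 (sdiff_singleton_ssubset.mpr hg)
  have hdep : M.Dep (insert g (C \ {g})) := by
    rw [insert_diff_singleton, insert_eq_of_mem hg]; exact hC.1
  exact (hI.insert_dep_iff.mp hdep).1

/-- For an optimal basis `B`, swapping `g ∈ B` for `f ∉ B` yields a basis only if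
`x g ≤ x f`. -/
lemma optimal_exchange_le {M : Matroid α} {x : α → ℝ} {B : Set α}
    (hB : IsOptimalBase M x B) (hBfin : B.Finite) {g f : α} (hg : g ∈ B) (hf : f ∉ B)
    (hbase : M.IsBase (insert f (B \ {g}))) : x g ≤ x f := by
  have h1 : setWeight x (insert f (B \ {g})) = x f + setWeight x (B \ {g}) :=
    finsum_mem_insert x (fun h => hf h.1) (hBfin.diff)
  have h2 : setWeight x B = x g + setWeight x (B \ {g}) := by
    nth_rewrite 1 [show B = insert g (B \ {g}) by
      rw [insert_diff_singleton, insert_eq_of_mem hg]]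
    exact finsum_mem_insert x (fun h => h.2 rfl) (hBfin.diff)
  have := hB.2 _ hbase
  rw [h1, h2] at this
  linarith

/-- Fundamental-circuit exchange: if `C` is a circuit contained in `insert e B'` with
`e ∈ C`, then for any `g ∈ C \ {e}` the set `insert e (B' \ {g})` is a basis. -/
lemma circuit_exchange_base {M : Matroid α} {B' : Set α} (hB' : M.IsBase B') {e : α}
    (heE : e ∈ M.E) (heB' : e ∉ B') {C : Set α} (hC : M.IsCircuit' C)
    (hCss : C ⊆ insert e B') (heC : e ∈ C) {g : α} (hg : g ∈ C \ {e}) :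
    M.IsBase (insert e (B' \ {g})) := by
  have hgB' : g ∈ B' := (hCss hg.1).resolve_left hg.2
  have hI : M.Indep (B' \ {g}) := hB'.indep.subset diff_subset
  have heI : e ∉ B' \ {g} := fun h => heB' h.1
  have hind : M.Indep (insert e (B' \ {g})) := by
    rw [hI.insert_indep_iff_of_notMem heI]
    refine ⟨heE, fun hecl => ?_⟩
    have hsub : C \ {g} ⊆ insert e (B' \ {g}) := by
      intro y hy
      rcases eq_or_ne y e with rfl | hye
      · exact mem_insert _ _
      · exact mem_insert_of_mem _ ⟨(hCss hy.1).resolve_left hye, hy.2⟩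
    have : g ∈ M.closure (B' \ {g}) := by
      have h1 := hC.mem_closure_diff hg.1
      have h2 : M.closure (C \ {g}) ⊆ M.closure (insert e (B' \ {g})) :=
        M.closure_subset_closure hsub
      rw [closure_insert_eq_of_mem_closure hecl] at h2
      exact h2 h1
    exact hB'.indep.notMem_closure_diff_of_mem hgB' this
  exact hB'.exchange_isBase_of_indep heB' hind

/-- for an optimal basis `B` and `e ∈ B`, `μ_e(x)` equals the
minimum weight of an element of the fundamental cut of `e`. -/
theorem stmt5 (M : Matroid α) [M.Finite] (hM : M.PaperLoopless)
    (x : α → ℝ) {B : Set α} (hB : IsOptimalBase M x B) {e : α} (heB : e ∈ B) :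
    muWeight M x e = sInf (x '' {f ∈ M.E \ B | M.IsBase (insert f (B \ {e}))}) := by
  obtain ⟨hBbase, hopt⟩ := hB
  have hBE : B ⊆ M.E := hBbase.subset_ground
  have hE : M.E.Finite := M.ground_finite
  have hBfin : B.Finite := hE.subset hBE
  have heE : e ∈ M.E := hBE heB
  set D := {f ∈ M.E \ B | M.IsBase (insert f (B \ {e}))} with hDdef
  -- D is nonempty
  obtain ⟨hsing, B₀, hB₀, heB₀⟩ := hM e heE
  obtain ⟨f1, hf1, hf1base⟩ := hBbase.exchange hB₀ ⟨heB, heB₀⟩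
  have hf1D : f1 ∈ D := ⟨⟨hB₀.subset_ground hf1.1, hf1.2⟩, hf1base⟩
  have hDfin : D.Finite := hE.subset (fun f hf => hf.1.1)
  have hxD_ne : (x '' D).Nonempty := ⟨x f1, mem_image_of_mem x hf1D⟩
  have hxD_fin : (x '' D).Finite := hDfin.image x
  -- minimum of x over D is attained
  obtain ⟨f₀, hf₀D, hf₀min⟩ : ∃ f₀ ∈ D, x f₀ = sInf (x '' D) := by
    obtain ⟨f₀, hf₀, h⟩ := hxD_ne.csInf_mem hxD_fin
    exact ⟨f₀, hf₀, h⟩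
  -- the set whose infimum is muWeight
  set S := {w | ∃ C, M.IsCircuit' C ∧ e ∈ C ∧ w = sSup (x '' (C \ {e}))} with hSdef
  have hSfin : S.Finite := by
    have : S ⊆ (fun C => sSup (x '' (C \ {e}))) '' {Y | Y ⊆ M.E} := by
      rintro w ⟨C, hC, -, rfl⟩
      exact ⟨C, hC.1.subset_ground, rfl⟩
    exact ((hE.finite_subsets).image _).subset this
  -- build a circuit containing e from f₀
  set B' := insert f₀ (B \ {e}) with hB'def
  have hB'base : M.IsBase B' := hf₀D.2
  have hf₀B : f₀ ∉ B := hf₀D.1.2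
  have hf₀e : f₀ ≠ e := fun h => hf₀B (h ▸ heB)
  have heB' : e ∉ B' := by
    rintro (h | h)
    · exact hf₀e h.symm
    · exact h.2 rfl
  have hdep : M.Dep (insert e B') := hB'base.insert_dep ⟨heE, heB'⟩
  obtain ⟨C, hCss, hC⟩ := exists_isCircuit_subset M hdep
  have heC : e ∈ C := by
    by_contra heC
    exact hC.1.not_indep (hB'base.indep.subset fun y hy => (hCss hy).resolve_left
      (fun h => heC (h ▸ hy)))
  have hCE : C ⊆ M.E := hC.1.subset_ground
  have hCfin : C.Finite := hE.subset hCE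
  -- C \ {e} is nonempty
  have hCe_ne : (C \ {e}).Nonempty := by
    rw [nonempty_iff_ne_empty]
    intro h
    have : C = {e} := subset_antisymm (fun y hy => by
      by_contra hye
      exact (h ▸ (⟨hy, hye⟩ : y ∈ C \ {e}) : y ∈ (∅ : Set α))) (singleton_subset_iff.mpr heC)
    exact hC.1.not_indep (this ▸ hsing)
  -- every element of C \ {e} has weight ≤ x f₀
  have hboundC : ∀ g ∈ C \ {e}, x g ≤ x f₀ := by
    intro g hg
    have hgB' : g ∈ B' := (hCss hg.1).resolve_left hg.2
    rcases hgB' with rfl | hgBe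
    · exact le_refl _
    · -- g ∈ B \ {e}; exchange g out of B' for e
      have hbase2 : M.IsBase (insert e (B' \ {g})) :=
        circuit_exchange_base hB'base heE heB' hC hCss heC hg
      have hEq : insert e (B' \ {g}) = insert f₀ (B \ {g}) := by
        have hge : g ≠ e := hgBe.2
        have hgf₀ : g ≠ f₀ := fun h => hf₀B (h ▸ hgBe.1)
        ext y
        simp only [hB'def, mem_insert_iff, mem_diff, mem_singleton_iff]
        constructor
        · rintro (rfl | ⟨(rfl | ⟨hyB, hye⟩), hyg⟩)
          · exact Or.inr ⟨heB, hge.symm⟩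
          · exact Or.inl rfl
          · exact Or.inr ⟨hyB, hyg⟩
        · rintro (rfl | ⟨hyB, hyg⟩)
          · exact Or.inr ⟨Or.inl rfl, hgf₀.symm⟩
          · rcases eq_or_ne y e with rfl | hye
            · exact Or.inl rfl
            · exact Or.inr ⟨Or.inr ⟨hyB, hye⟩, hyg⟩
      rw [hEq] at hbase2
      exact optimal_exchange_le ⟨hBbase, hopt⟩ hBfin hgBe.1 hf₀B hbase2
  have hsupC : sSup (x '' (C \ {e})) ≤ x f₀ := by
    apply csSup_le (hCe_ne.image x)
    rintro w ⟨g, hg, rfl⟩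
    exact hboundC g hg
  have hS_ne : S.Nonempty := ⟨sSup (x '' (C \ {e})), C, hC, heC, rfl⟩
  -- ≤ direction
  have hle : muWeight M x e ≤ sInf (x '' D) := by
    rw [← hf₀min]
    exact le_trans (csInf_le hSfin.bddBelow ⟨C, hC, heC, rfl⟩) hsupC
  -- ≥ direction
  have hge : sInf (x '' D) ≤ muWeight M x e := by
    apply le_csInf hS_ne
    rintro w ⟨C', hC', heC', rfl⟩
    have hC'E : C' ⊆ M.E := hC'.1.subset_ground
    -- find f ∈ (C' \ {e}) ∩ D
    set T := (B \ {e}) ∪ (C' \ {e}) with hTdef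
    have hTE : T ⊆ M.E := union_subset (diff_subset.trans hBE) (diff_subset.trans hC'E)
    have heT : e ∉ T := by
      rintro (⟨-, h⟩ | ⟨-, h⟩) <;> exact h rfl
    have hBe_indep : M.Indep (B \ {e}) := hBbase.indep.subset diff_subset
    obtain ⟨J, hJbasis, hsubJ⟩ := hBe_indep.subset_isBasis_of_subset subset_union_left hTE
    have hTcl : M.E ⊆ M.closure T := by
      have hBcl : B ⊆ M.closure T := by
        intro b hb
        rcases eq_or_ne b e with rfl | hbe
        · exact M.closure_subset_closure subset_union_right (hC'.mem_closure_diff heC')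
        · exact M.subset_closure T hTE (Or.inl ⟨hb, hbe⟩)
      have h1 : M.closure B ⊆ M.closure T := M.closure_subset_closure_of_subset_closure hBcl
      have h2 : M.closure B = M.E := (isBase_iff_indep_closure_eq.mp hBbase).2
      rw [← h2]; exact h1
    have hJbase : M.IsBase J := by
      apply hJbasis.indep.isBase_of_ground_subset_closure
      rw [hJbasis.closure_eq_closure]
      exact hTcl
    have heJ : e ∉ J := fun h => heT (hJbasis.subset h)
    have hJfin : J.Finite := hBbase.finite_of_finite hBfin hJbase
    have hJne : J ≠ B \ {e} := by
      intro h
      have h1 : J.ncard = B.ncard := hJbase.ncard_eq_ncard_of_isBase hBbase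
      have h2 : (B \ {e}).ncard < B.ncard := Set.ncard_diff_singleton_lt_of_mem heB hBfin
      rw [h] at h1
      exact h2.ne h1
    obtain ⟨f, hfJ, hfBe⟩ := exists_of_ssubset (hsubJ.ssubset_of_ne hJne.symm)
    have hfT : f ∈ T := hJbasis.subset hfJ
    have hfC : f ∈ C' \ {e} := hfT.resolve_left hfBe
    have hfB : f ∉ B := fun h => hfBe ⟨h, hfC.2⟩
    have hJeq : insert f (B \ {e}) = J := by
      apply Set.Finite.eq_of_subset_of_encard_le' hJfin (insert_subset hfJ hsubJ)
      rw [Set.encard_insert_of_notMem hfBe, Set.encard_diff_singleton_add_one heB]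
      exact (hJbase.encard_eq_encard_of_isBase hBbase).le
    have hfD : f ∈ D := ⟨⟨hJbase.subset_ground hfJ, hfB⟩, hJeq ▸ hJbase⟩
    calc sInf (x '' D) ≤ x f := csInf_le hxD_fin.bddBelow (mem_image_of_mem x hfD)
      _ ≤ sSup (x '' (C' \ {e})) :=
        le_csSup (((hE.subset hC'E).diff).image x).bddAbove (mem_image_of_mem x hfC)
  exact le_antisymm hle hge
end

section
/- Let M be a loopless matroid with weights x : E → ℝ, B an x-optimal basis, and e ∈ B. Then the minimum weight of a basis avoiding e equals x(B) - x(e) + μ_e(x). -/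
open Matroid Set

variable {α : Type*}

lemma setWeight_insert (x : α → ℝ) {S : Set α} (hS : S.Finite) {a : α} (ha : a ∉ S) :
    setWeight x (insert a S) = x a + setWeight x S := by
  unfold setWeight
  exact finsum_mem_insert x ha hS

lemma setWeight_diff (x : α → ℝ) {S : Set α} (hS : S.Finite) {a : α} (ha : a ∈ S) :
    setWeight x S = x a + setWeight x (S \ {a}) := by
  have h : S = insert a (S \ {a}) := by
    rw [insert_diff_singleton, insert_eq_of_mem ha]
  nth_rewrite 1 [h]
  exact setWeight_insert x (hS.diff) (by simp)

lemma exists_circuit_subset (M : Matroid α) [M.Finite] {D : Set α} (hD : M.Dep D) :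
    ∃ C, C ⊆ D ∧ M.IsCircuit' C := by
  have hfin : D.Finite := M.set_finite D hD.subset_ground
  obtain ⟨n, hn⟩ : ∃ n, D.ncard = n := ⟨_, rfl⟩
  induction n using Nat.strong_induction_on generalizing D with
  | _ n ih =>
    by_cases h : ∀ ⦃D'⦄, D' ⊂ D → M.Indep D'
    · exact ⟨D, Subset.rfl, hD, h⟩
    push_neg at h
    obtain ⟨D', hss, hD'⟩ := h
    have hdep : M.Dep D' := ⟨hD', hss.subset.trans hD.subset_ground⟩
    obtain ⟨C, hCss, hC⟩ := ih D'.ncard (hn ▸ Set.ncard_lt_ncard hss hfin) hdep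
      (hfin.subset hss.subset) rfl
    exact ⟨C, hCss.trans hss.subset, hC⟩

lemma Matroid.IsCircuit'.mem_closure {M : Matroid α} {C : Set α} (hC : M.IsCircuit' C) {a : α}
    (ha : a ∈ C) : a ∈ M.closure (C \ {a}) := by
  have hI : M.Indep (C \ {a}) := hC.2 (sdiff_singleton_ssubset.2 ha)
  rw [hI.mem_closure_iff_of_notMem (by simp), insert_diff_singleton, insert_eq_of_mem ha]
  exact hC.1

lemma exists_fund_circuit {M : Matroid α} [M.Finite] {B' : Set α} {e : α} (hB' : M.IsBase B')
    (he : e ∈ M.E) (heB' : e ∉ B') : ∃ C, M.IsCircuit' C ∧ e ∈ C ∧ C ⊆ insert e B' := by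
  obtain ⟨C, hCss, hC⟩ := exists_circuit_subset M (hB'.insert_dep ⟨he, heB'⟩)
  refine ⟨C, hC, ?_, hCss⟩
  by_contra h
  exact hC.1.not_indep (hB'.indep.subset fun t ht =>
    ((hCss ht).resolve_left (by rintro rfl; exact h ht)))

/-- Exchange along a circuit contained in `insert e B'`. -/
lemma circuit_exchange {M : Matroid α} {B' C : Set α} {e f : α} (hB' : M.IsBase B')
    (heB' : e ∉ B') (hC : M.IsCircuit' C) (hCss : C ⊆ insert e B') (heC : e ∈ C)
    (hf : f ∈ C \ {e}) : M.IsBase (insert e (B' \ {f})) := by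
  obtain ⟨hfC, hfe⟩ := hf
  have hfB' : f ∈ B' := (hCss hfC).resolve_left hfe
  have hecl : e ∉ M.closure (B' \ {f}) := by
    intro h
    have hsub : C \ {f} ⊆ M.closure (B' \ {f}) := by
      rintro t ⟨htC, htf⟩
      rcases hCss htC with rfl | htB'
      · exact h
      · exact M.subset_closure _ ((diff_subset).trans hB'.subset_ground) ⟨htB', htf⟩
    have : f ∈ M.closure (B' \ {f}) := by
      have := M.closure_subset_closure_of_subset_closure hsub (hC.mem_closure hfC)
      exact this
    exact hB'.indep.notMem_closure_sdiff_of_mem hfB' this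
  have heE : e ∈ M.E := hC.1.subset_ground heC
  have hind : M.Indep (insert e (B' \ {f})) := by
    rw [(hB'.indep.subset diff_subset).insert_indep_iff_of_notMem
      (fun h => heB' h.1)]
    exact ⟨heE, hecl⟩
  exact hB'.exchange_isBase_of_indep heB' hind

/-- the minimum weight of a basis avoiding `e` is
`x(B) - x(e) + μ_e(x)`. -/
theorem stmt6 (M : Matroid α) [M.Finite] (hM : M.PaperLoopless)
    (x : α → ℝ) {B : Set α} (hB : IsOptimalBase M x B) {e : α} (heB : e ∈ B) :
    sInf {w | ∃ B', M.IsBase B' ∧ e ∉ B' ∧ w = setWeight x B'} =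
      setWeight x B - x e + muWeight M x e := by
  obtain ⟨hBb, hopt⟩ := hB
  have heE : e ∈ M.E := hBb.subset_ground heB
  have hBfin : B.Finite := M.set_finite B hBb.subset_ground
  -- the set of weights of bases avoiding e
  set S := {w | ∃ B', M.IsBase B' ∧ e ∉ B' ∧ w = setWeight x B'} with hS
  -- the set defining μ
  set T := {w | ∃ C, M.IsCircuit' C ∧ e ∈ C ∧ w = sSup (x '' (C \ {e}))} with hT
  have hSfin : S.Finite := by
    apply (M.ground_finite.finite_subsets.image (setWeight x)).subset
    rintro w ⟨B', hB', -, rfl⟩; exact ⟨B', hB'.subset_ground, rfl⟩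
  have hTfin : T.Finite := by
    apply ((M.ground_finite.finite_subsets.image (fun C => sSup (x '' (C \ {e}))))).subset
    rintro w ⟨C, hC, -, rfl⟩; exact ⟨C, hC.1.subset_ground, rfl⟩
  -- T is nonempty
  obtain ⟨-, B₀, hB₀, heB₀⟩ := hM e heE
  obtain ⟨C₁, hC₁, heC₁, -⟩ := exists_fund_circuit hB₀ heE heB₀
  have hTne : T.Nonempty := ⟨_, C₁, hC₁, heC₁, rfl⟩
  -- basic facts about circuits containing e
  have hCdiff : ∀ ⦃C : Set α⦄, M.IsCircuit' C → e ∈ C → (C \ {e}).Nonempty ∧ (C \ {e}).Finite := by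
    intro C hC heC
    constructor
    · by_contra h
      rw [not_nonempty_iff_eq_empty, diff_eq_empty] at h
      have : C = {e} := subset_antisymm h (singleton_subset_iff.2 heC)
      exact hC.1.not_indep (this ▸ (hM e heE).1)
    · exact (M.set_finite C hC.1.subset_ground).diff
  -- S is nonempty and every element of S is ≥ the RHS
  have hlb : ∀ w ∈ S, setWeight x B - x e + muWeight M x e ≤ w := by
    rintro w ⟨B', hB', heB', rfl⟩
    obtain ⟨C, hC, heC, hCss⟩ := exists_fund_circuit hB' heE heB'
    obtain ⟨hne, hfin⟩ := hCdiff hC heC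
    have himg : (x '' (C \ {e})).Nonempty := hne.image x
    have himgf : (x '' (C \ {e})).Finite := hfin.image x
    obtain ⟨f, hfC, hfx⟩ := himg.csSup_mem himgf
    have hmu : muWeight M x e ≤ x f := by
      rw [hfx]
      exact csInf_le hTfin.bddBelow ⟨C, hC, heC, rfl⟩
    have hbase := circuit_exchange hB' heB' hC hCss heC hfC
    have hB'fin : B'.Finite := M.set_finite B' hB'.subset_ground
    have hfB' : f ∈ B' := (hCss hfC.1).resolve_left hfC.2
    have hw : setWeight x (insert e (B' \ {f})) = x e + (setWeight x B' - x f) := by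
      rw [setWeight_insert x (hB'fin.diff) (fun h => heB' h.1)]
      have := setWeight_diff x hB'fin hfB'
      linarith
    have hle := hopt _ hbase
    rw [hw] at hle
    linarith
  have hSne : S.Nonempty := by
    -- pick circuit C₀ achieving μ, then a swap element
    obtain ⟨w₀, hw₀⟩ := hTne
    exact ⟨_, B₀, hB₀, heB₀, rfl⟩
  -- upper bound: exhibit a basis avoiding e of weight ≤ RHS
  have hub : ∃ w ∈ S, w ≤ setWeight x B - x e + muWeight M x e := by
    have hmem : muWeight M x e ∈ T := hTne.csInf_mem hTfin
    obtain ⟨C₀, hC₀, heC₀, hμ⟩ := hmem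
    obtain ⟨hne, hfin⟩ := hCdiff hC₀ heC₀
    have hBd : B \ {e} ⊆ M.E := diff_subset.trans hBb.subset_ground
    obtain ⟨f, hfC₀, hfcl⟩ : ∃ f ∈ C₀ \ {e}, f ∉ M.closure (B \ {e}) := by
      by_contra h
      push_neg at h
      have hsub : C₀ \ {e} ⊆ M.closure (B \ {e}) := h
      have : e ∈ M.closure (B \ {e}) :=
        M.closure_subset_closure_of_subset_closure hsub (hC₀.mem_closure heC₀)
      exact hBb.indep.notMem_closure_sdiff_of_mem heB this
    have hfE : f ∈ M.E := hC₀.1.subset_ground hfC₀.1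
    have hfB : f ∉ B := by
      intro h
      exact hfcl (M.subset_closure _ hBd ⟨h, hfC₀.2⟩)
    have hind : M.Indep (insert f (B \ {e})) := by
      rw [(hBb.indep.subset diff_subset).insert_indep_iff_of_notMem
        (fun h => hfB h.1)]
      exact ⟨hfE, hfcl⟩
    have hbase := hBb.exchange_isBase_of_indep hfB hind
    have heB' : e ∉ insert f (B \ {e}) := by
      rintro (rfl | h)
      · exact hfC₀.2 rfl
      · exact h.2 rfl
    have hxf : x f ≤ muWeight M x e := by
      rw [hμ]
      exact le_csSup (hfin.image x).bddAbove ⟨f, hfC₀, rfl⟩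
    refine ⟨setWeight x (insert f (B \ {e})), ⟨_, hbase, heB', rfl⟩, ?_⟩
    rw [setWeight_insert x (hBfin.diff) (fun h => hfB h.1)]
    have := setWeight_diff x hBfin heB
    linarith
  refine le_antisymm ?_ (le_csInf hSne hlb)
  obtain ⟨w, hwS, hwle⟩ := hub
  exact (csInf_le hSfin.bddBelow hwS).trans hwle
end
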